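/- arXiv:1803.03030 — 2 statements merged into one kernel-verified Lean document; each statement's English description precedes it below -/
import Mathlib

section
/- For a proper convex function f on R^n and a point x with ∂f(x) nonempty and not containing 0, the polar of the descent cone equals the cone generated by the subdifferential: D(f,x)° = cl(∪_{t≥0} t·∂f(x)). -/
open scoped RealInnerProductSpace Pointwise

section Aux
variable {n : ℕ}
local notation "E" => EuclideanSpace ℝ (Fin n)

/-- difference quotient -/
noncomputable def dq (f : E → ℝ) (x z : E) (t : ℝ) : ℝ := (f (x + t • z) - f x) / t

/-- directional derivative -/
noncomputable def dd (f : E → ℝ) (x z : E) : ℝ := sInf (dq f x z '' Set.Ioi 0)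

lemma dq_set_nonempty (f : E → ℝ) (x z : E) : (dq f x z '' Set.Ioi 0).Nonempty :=
  ⟨dq f x z 1, 1, by norm_num, rfl⟩

lemma inner_le_dq {f : E → ℝ} {x w : E} (hw : ∀ y, f x + ⟪w, y - x⟫ ≤ f y)
    (z : E) {t : ℝ} (ht : 0 < t) : ⟪w, z⟫ ≤ dq f x z t := by
  have h := hw (x + t • z)
  rw [add_sub_cancel_left, real_inner_smul_right] at h
  rw [dq, le_div_iff₀ ht]
  linarith

lemma dq_bddBelow {f : E → ℝ} {x w : E} (hw : ∀ y, f x + ⟪w, y - x⟫ ≤ f y) (z : E) :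
    BddBelow (dq f x z '' Set.Ioi 0) := by
  refine ⟨⟪w, z⟫, ?_⟩
  rintro a ⟨t, ht, rfl⟩
  exact inner_le_dq hw z ht

lemma dd_le_dq {f : E → ℝ} {x w : E} (hw : ∀ y, f x + ⟪w, y - x⟫ ≤ f y) (z : E)
    {t : ℝ} (ht : 0 < t) : dd f x z ≤ dq f x z t :=
  csInf_le (dq_bddBelow hw z) ⟨t, ht, rfl⟩

lemma convexOn_line {f : E → ℝ} (hf : ConvexOn ℝ Set.univ f) (x z : E) :
    ConvexOn ℝ Set.univ (fun t : ℝ => f (x + t • z)) := by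
  have h := hf.comp_affineMap (AffineMap.lineMap x (x + z))
  have he : ∀ t : ℝ, (AffineMap.lineMap x (x + z)) t = x + t • z := by
    intro t
    rw [AffineMap.lineMap_apply, vadd_eq_add, vsub_eq_sub]
    module
  have hfe : (f ∘ ⇑(AffineMap.lineMap x (x + z))) = fun t : ℝ => f (x + t • z) :=
    funext fun t => by rw [Function.comp_apply, he]
  rwa [hfe, Set.preimage_univ] at h

lemma dq_mono {f : E → ℝ} (hf : ConvexOn ℝ Set.univ f) (x z : E) {s t : ℝ}
    (hs : 0 < s) (hst : s ≤ t) : dq f x z s ≤ dq f x z t := by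
  have hg := convexOn_line hf x z
  have h := hg.secant_mono (a := 0) (x := s) (y := t) trivial trivial trivial
    hs.ne' (hs.trans_le hst).ne' hst
  simpa [dq] using h

lemma dd_zero (f : E → ℝ) (x : E) : dd f x 0 = 0 := by
  have : dq f x 0 '' Set.Ioi 0 = {0} := by
    apply Set.eq_singleton_iff_nonempty_unique_mem.2
    refine ⟨dq_set_nonempty f x 0, ?_⟩
    rintro a ⟨t, ht, rfl⟩
    simp [dq]
  rw [dd, this, csInf_singleton]

lemma dd_smul {f : E → ℝ} (x z : E) {c : ℝ} (hc : 0 < c) :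
    dd f x (c • z) = c * dd f x z := by
  have hdqc : ∀ t : ℝ, 0 < t → dq f x (c • z) t = c * dq f x z (c * t) := by
    intro t ht
    simp only [dq, smul_smul, mul_comm t c]
    field_simp
  have himg : dq f x (c • z) '' Set.Ioi 0 = c • (dq f x z '' Set.Ioi 0) := by
    ext a
    constructor
    · rintro ⟨t, ht, rfl⟩
      rw [Set.mem_Ioi] at ht
      exact ⟨dq f x z (c * t), ⟨c * t, Set.mem_Ioi.2 (by positivity), rfl⟩,
        by simp only [smul_eq_mul]; rw [← hdqc t ht]⟩
    · rintro ⟨a, ⟨t, ht, rfl⟩, rfl⟩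
      rw [Set.mem_Ioi] at ht
      refine ⟨t / c, Set.mem_Ioi.2 (by positivity), ?_⟩
      simp only [smul_eq_mul]
      rw [hdqc (t / c) (by positivity), mul_div_cancel₀ _ (ne_of_gt hc)]
  rw [dd, himg, Real.sInf_smul_of_nonneg hc.le, smul_eq_mul, dd]

lemma dq_half {f : E → ℝ} (hf : ConvexOn ℝ Set.univ f) (x y z : E) {t : ℝ} (ht : 0 < t) :
    dq f x (y + z) t ≤ dq f x y (2 * t) + dq f x z (2 * t) := by
  have hkey : f (x + t • (y + z)) ≤ (1/2 : ℝ) * f (x + (2*t) • y) + (1/2 : ℝ) * f (x + (2*t) • z) := by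
    have h := hf.2 (Set.mem_univ (x + (2*t) • y)) (Set.mem_univ (x + (2*t) • z))
      (by norm_num : (0:ℝ) ≤ 1/2) (by norm_num : (0:ℝ) ≤ 1/2) (by norm_num)
    have he : (1/2 : ℝ) • (x + (2*t) • y) + (1/2 : ℝ) • (x + (2*t) • z) = x + t • (y + z) := by
      module
    rwa [he, smul_eq_mul, smul_eq_mul] at h
  have h2t : (0:ℝ) < 2 * t := by linarith
  rw [dq, dq, dq, ← add_div, div_le_div_iff₀ ht h2t]
  nlinarith [hkey]

lemma dd_add {f : E → ℝ} (hf : ConvexOn ℝ Set.univ f) {x w : E}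
    (hw : ∀ y, f x + ⟪w, y - x⟫ ≤ f y) (y z : E) :
    dd f x (y + z) ≤ dd f x y + dd f x z := by
  refine le_of_forall_pos_le_add fun ε hε => ?_
  obtain ⟨a, ⟨t₁, ht₁, rfl⟩, ha⟩ := exists_lt_of_csInf_lt (dq_set_nonempty f x y)
    (lt_add_of_pos_right (dd f x y) (half_pos hε))
  obtain ⟨b, ⟨t₂, ht₂, rfl⟩, hb⟩ := exists_lt_of_csInf_lt (dq_set_nonempty f x z)
    (lt_add_of_pos_right (dd f x z) (half_pos hε))
  rw [Set.mem_Ioi] at ht₁ ht₂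
  set t := min t₁ t₂ / 2 with htdef
  have ht : 0 < t := by positivity
  have h2t₁ : 2 * t ≤ t₁ := by
    rw [htdef]; have := min_le_left t₁ t₂; linarith
  have h2t₂ : 2 * t ≤ t₂ := by
    rw [htdef]; have := min_le_right t₁ t₂; linarith
  calc dd f x (y + z) ≤ dq f x (y + z) t := dd_le_dq hw _ ht
    _ ≤ dq f x y (2 * t) + dq f x z (2 * t) := dq_half hf x y z ht
    _ ≤ dq f x y t₁ + dq f x z t₂ :=
        add_le_add (dq_mono hf x y (by linarith) h2t₁) (dq_mono hf x z (by linarith) h2t₂)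
    _ ≤ (dd f x y + ε/2) + (dd f x z + ε/2) := add_le_add ha.le hb.le
    _ = dd f x y + dd f x z + ε := by ring

lemma dd_le_sub {f : E → ℝ} {x w : E} (hw : ∀ y, f x + ⟪w, y - x⟫ ≤ f y) (z : E) :
    dd f x z ≤ f (x + z) - f x := by
  have h := dd_le_dq hw z (t := 1) one_pos
  simpa [dq] using h

/-- Max formula half: there is a subgradient achieving at least the directional derivative. -/
lemma exists_subgrad {f : E → ℝ} (hf : ConvexOn ℝ Set.univ f) {x w₀ : E}
    (hw₀ : ∀ y, f x + ⟪w₀, y - x⟫ ≤ f y) (z : E) :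
    ∃ w : E, (∀ y, f x + ⟪w, y - x⟫ ≤ f y) ∧ dd f x z ≤ ⟪w, z⟫ := by
  rcases eq_or_ne z 0 with rfl | hz
  · exact ⟨w₀, hw₀, by rw [dd_zero, inner_zero_right]⟩
  have H : ∀ c : ℝ, c • z = 0 → c • (dd f x z) = 0 := by
    intro c hc
    rcases smul_eq_zero.1 hc with rfl | h
    · simp
    · exact absurd h hz
  set p := LinearPMap.mkSpanSingleton' (σ := RingHom.id ℝ) z (dd f x z) H with hp
  have hdom : ∀ a : p.domain, p a ≤ dd f x a := by
    rintro ⟨a, ha⟩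
    have ha' : a ∈ Submodule.span ℝ {z} := ha
    obtain ⟨c, rfl⟩ := Submodule.mem_span_singleton.1 ha'
    rw [LinearPMap.mkSpanSingleton'_apply]
    rcases lt_trichotomy c 0 with hc | rfl | hc
    · have h1 : dd f x ((-c) • z) = (-c) * dd f x z := dd_smul x z (by linarith)
      have h2 : dd f x (c • z) + dd f x ((-c) • z) ≥ 0 := by
        have := dd_add hf hw₀ (c • z) ((-c) • z)
        have he : c • z + (-c) • z = 0 := by module
        rw [he, dd_zero] at this
        linarith
      simp only [smul_eq_mul, RingHom.id_apply]
      nlinarith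
    · simp [dd_zero]
    · rw [dd_smul x z hc, smul_eq_mul, RingHom.id_apply]
  obtain ⟨g, hg_eq, hg_le⟩ := exists_extension_of_le_sublinear p (dd f x)
    (fun c hc y => dd_smul x y hc) (dd_add hf hw₀) hdom
  have hzmem : z ∈ p.domain := by
    rw [hp, LinearPMap.domain_mkSpanSingleton]
    exact Submodule.mem_span_singleton_self z
  have hgz : g z = dd f x z := by
    have h1 := hg_eq ⟨z, hzmem⟩
    rw [LinearPMap.mkSpanSingleton'_apply_self] at h1
    exact h1
  set w : E := (InnerProductSpace.toDual ℝ (EuclideanSpace ℝ (Fin n))).symm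
    (LinearMap.toContinuousLinearMap g) with hwdef
  have hw_inner : ∀ y : E, ⟪w, y⟫ = g y := fun y =>
    InnerProductSpace.toDual_symm_apply
  refine ⟨w, fun y => ?_, ?_⟩
  · have h1 : g (y - x) ≤ dd f x (y - x) := hg_le (y - x)
    have h2 : dd f x (y - x) ≤ f (x + (y - x)) - f x := dd_le_sub hw₀ (y - x)
    rw [add_sub_cancel] at h2
    rw [hw_inner]
    linarith
  · rw [hw_inner, hgz]

end Aux

/-- For a convex function `f : ℝⁿ → ℝ` and a point `x` with `∂f(x)` nonempty and not
containing `0`, the polar of the descent cone of `f` at `x` equals the closed cone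
generated by the subdifferential: `D(f,x)° = cl(∪_{t ≥ 0} t ∂f(x))`. -/
theorem stmt16 (n : ℕ) (f : EuclideanSpace ℝ (Fin n) → ℝ)
    (hf : ConvexOn ℝ Set.univ f) (x : EuclideanSpace ℝ (Fin n))
    (sub : Set (EuclideanSpace ℝ (Fin n)))
    (hsub : sub = {v | ∀ y, f x + ⟪v, y - x⟫ ≤ f y})
    (hne : sub.Nonempty) (h0 : (0 : EuclideanSpace ℝ (Fin n)) ∉ sub)
    (D : Set (EuclideanSpace ℝ (Fin n)))
    (hD : D = {z | z = 0 ∨ ∃ t : ℝ, 0 < t ∧ f (x + t • z) ≤ f x}) :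
    {v | ∀ z ∈ D, ⟪v, z⟫ ≤ 0} = closure (⋃ t ∈ {t : ℝ | 0 ≤ t}, t • sub) := by
  obtain ⟨w₀, hw₀mem⟩ := hne
  have hw₀ : ∀ y, f x + ⟪w₀, y - x⟫ ≤ f y := by rw [hsub] at hw₀mem; exact hw₀mem
  set U : Set (EuclideanSpace ℝ (Fin n)) := ⋃ t ∈ {t : ℝ | 0 ≤ t}, t • sub with hU
  have hmemU : ∀ t : ℝ, 0 ≤ t → ∀ w ∈ sub, t • w ∈ U := by
    intro t ht w hw
    exact Set.mem_iUnion₂.2 ⟨t, ht, Set.smul_mem_smul_set hw⟩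
  have h0U : (0 : EuclideanSpace ℝ (Fin n)) ∈ U := by
    have := hmemU 0 le_rfl w₀ hw₀mem
    rwa [zero_smul] at this
  -- sub is convex
  have hsubconv : Convex ℝ sub := by
    rw [hsub]
    intro a ha b hb p q hp hq hpq
    intro y
    have h1 := ha y
    have h2 := hb y
    have h3 : ⟪p • a + q • b, y - x⟫ = p * ⟪a, y - x⟫ + q * ⟪b, y - x⟫ := by
      rw [inner_add_left, real_inner_smul_left, real_inner_smul_left]
    show f x + ⟪p • a + q • b, y - x⟫ ≤ f y
    rw [h3]
    have h4 := mul_le_mul_of_nonneg_left h1 hp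
    have h5 := mul_le_mul_of_nonneg_left h2 hq
    have h6 : p * f y + q * f y = f y := by rw [← add_mul, hpq, one_mul]
    have h7 : p * f x + q * f x = f x := by rw [← add_mul, hpq, one_mul]
    nlinarith [h4, h5, h6, h7]
  -- U is convex
  have hUconv : Convex ℝ U := by
    intro a ha b hb p q hp hq hpq
    simp only [hU, Set.mem_iUnion₂, Set.mem_smul_set, Set.mem_setOf_eq] at ha hb
    obtain ⟨t₁, ht₁, a, ha, rfl⟩ := ha
    obtain ⟨t₂, ht₂, b, hb, rfl⟩ := hb
    rcases eq_or_lt_of_le (by positivity : (0:ℝ) ≤ p * t₁ + q * t₂) with hr | hr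
    · have hpt : p * t₁ = 0 ∧ q * t₂ = 0 := by
        constructor <;> nlinarith [mul_nonneg hp ht₁, mul_nonneg hq ht₂]
      have : p • t₁ • a + q • t₂ • b = (0 : EuclideanSpace ℝ (Fin n)) := by
        rw [smul_smul, smul_smul, hpt.1, hpt.2, zero_smul, zero_smul, add_zero]
      rw [this]; exact h0U
    · set r := p * t₁ + q * t₂ with hrdef
      have hw : (p * t₁ / r) • a + (q * t₂ / r) • b ∈ sub := by
        apply hsubconv ha hb (by positivity) (by positivity)
        field_simp
        exact hrdef.symm
      have heq : p • t₁ • a + q • t₂ • b = r • ((p * t₁ / r) • a + (q * t₂ / r) • b) := by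
        rw [smul_add, smul_smul, smul_smul, smul_smul, smul_smul,
          mul_div_cancel₀ _ (ne_of_gt hr), mul_div_cancel₀ _ (ne_of_gt hr)]
      rw [heq]
      exact hmemU r hr.le _ hw
  -- easy inclusion: every element of the cone is in the polar
  have hpolar : ∀ w ∈ sub, ∀ z ∈ D, ⟪w, z⟫ ≤ 0 := by
    intro w hw z hz
    rw [hsub] at hw
    rw [hD, Set.mem_setOf_eq] at hz
    rcases hz with rfl | ⟨t, ht, hft⟩
    · simp
    · have h1 := hw (x + t • z)
      rw [add_sub_cancel_left, real_inner_smul_right] at h1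
      nlinarith
  apply Set.Subset.antisymm
  · -- hard direction: polar ⊆ closure of cone
    intro v hv
    simp only [Set.mem_setOf_eq] at hv
    by_contra hvC
    obtain ⟨φ, u, hφ, hu⟩ := geometric_hahn_banach_closed_point
      hUconv.closure isClosed_closure hvC
    set z : EuclideanSpace ℝ (Fin n) :=
      (InnerProductSpace.toDual ℝ (EuclideanSpace ℝ (Fin n))).symm φ with hzdef
    have hz_inner : ∀ y : EuclideanSpace ℝ (Fin n), ⟪z, y⟫ = φ y := fun y =>
      InnerProductSpace.toDual_symm_apply
    have hu_pos : 0 < u := by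
      have := hφ 0 (subset_closure h0U)
      rwa [map_zero] at this
    -- ⟪z, w⟫ ≤ 0 for all w ∈ sub
    have hzw : ∀ w ∈ sub, ⟪z, w⟫ ≤ 0 := by
      intro w hw
      rw [hz_inner]
      by_contra hpos
      push_neg at hpos
      have hmem := hφ ((u / φ w) • w)
        (subset_closure (hmemU _ (by positivity) w hw))
      rw [map_smul, smul_eq_mul, div_mul_cancel₀ _ (ne_of_gt hpos)] at hmem
      exact lt_irrefl u hmem
    -- a strict descent point exists since 0 ∉ sub
    obtain ⟨y₀, hy₀⟩ : ∃ y, f y < f x := by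
      by_contra hc
      push_neg at hc
      apply h0
      rw [hsub]
      intro y
      simpa using hc y
    set z₀ := y₀ - x with hz₀def
    have hz₀D : z₀ ∈ D := by
      rw [hD]
      exact Or.inr ⟨1, one_pos, by rw [one_smul, add_sub_cancel]; exact hy₀.le⟩
    have hddz : dd f x z ≤ 0 := by
      obtain ⟨w, hwsub, hwz⟩ := exists_subgrad hf hw₀ z
      have : w ∈ sub := by rw [hsub]; exact hwsub
      calc dd f x z ≤ ⟪w, z⟫ := hwz
        _ = ⟪z, w⟫ := real_inner_comm z w
        _ ≤ 0 := hzw w this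
    have hddz₀ : dd f x z₀ < 0 := by
      have := dd_le_sub hw₀ z₀
      rw [hz₀def, add_sub_cancel] at this
      linarith
    have hvz : 0 < ⟪v, z⟫ := by
      have : u < ⟪z, v⟫ := by rw [hz_inner]; exact hu
      rw [real_inner_comm] at this
      linarith
    have hvz₀ : ⟪v, z₀⟫ ≤ 0 := hv z₀ hz₀D
    -- choose ε
    set ε : ℝ := ⟪v, z⟫ / (2 * (1 - ⟪v, z₀⟫)) with hεdef
    have h1c : 0 < 1 - ⟪v, z₀⟫ := by linarith
    have hε : 0 < ε := by positivity
    have hεbound : 0 < ⟪v, z⟫ + ε * ⟪v, z₀⟫ := by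
      have hkey : ε * (-⟪v, z₀⟫) ≤ ⟪v, z⟫ / 2 := by
        rw [hεdef, div_mul_eq_mul_div, div_le_div_iff₀ (by positivity) two_pos]
        nlinarith [mul_le_mul_of_nonneg_left (show -⟪v, z₀⟫ ≤ 1 - ⟪v, z₀⟫ by linarith) hvz.le]
      nlinarith
    set z' := z + ε • z₀ with hz'def
    have hddz' : dd f x z' < 0 := by
      have h1 := dd_add hf hw₀ z (ε • z₀)
      have h2 : dd f x (ε • z₀) = ε * dd f x z₀ := dd_smul x z₀ hε
      have : dd f x z' ≤ dd f x z + ε * dd f x z₀ := by rw [hz'def]; rw [h2] at h1; exact h1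
      nlinarith
    obtain ⟨a, ⟨t, ht, rfl⟩, ha⟩ := exists_lt_of_csInf_lt (dq_set_nonempty f x z') hddz'
    rw [Set.mem_Ioi] at ht
    have hfz' : f (x + t • z') < f x := by
      rw [dq, div_neg_iff] at ha
      rcases ha with ⟨h1, h2⟩ | ⟨h1, h2⟩
      · linarith
      · linarith
    have hz'D : z' ∈ D := by
      rw [hD]
      exact Or.inr ⟨t, ht, hfz'.le⟩
    have := hv z' hz'D
    rw [hz'def, inner_add_right, real_inner_smul_right] at this
    linarith
  · -- easy direction
    have hclosed : IsClosed {v : EuclideanSpace ℝ (Fin n) | ∀ z ∈ D, ⟪v, z⟫ ≤ 0} := by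
      have heq : {v : EuclideanSpace ℝ (Fin n) | ∀ z ∈ D, ⟪v, z⟫ ≤ 0} =
          ⋂ z ∈ D, {v | ⟪v, z⟫ ≤ 0} := by
        ext v; simp
      rw [heq]
      exact isClosed_biInter fun z _ =>
        isClosed_le (Continuous.inner continuous_id continuous_const) continuous_const
    apply closure_minimal _ hclosed
    intro a ha
    simp only [hU, Set.mem_iUnion₂, Set.mem_smul_set, Set.mem_setOf_eq] at ha
    obtain ⟨t, ht, w, hw, rfl⟩ := ha
    intro zz hzz
    rw [real_inner_smul_left]
    exact mul_nonpos_of_nonneg_of_nonpos ht (hpolar w hw zz hzz)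
end

section
/- Let g ~ N(0, I_n), n ≥ 3, and let Ω be the one-dimensional difference operator. For a subset S̄ ⊆ {1,…,n−1}, E[ Σ_{j,k ∈ S̄} ⟨ω_j, ω_k⟩ sgn(⟨ω_j,g⟩) sgn(⟨ω_k,g⟩) ] = Σ_{j,k ∈ S̄} ⟨ω_j, ω_k⟩ (2/π) arcsin(⟨ω_j,ω_k⟩/2) ≤ 2|S̄| + (2/3)·#{i ∈ {2,…,n−1} : i ∈ S̄, i−1 ∈ S̄}. -/
open MeasureTheory ProbabilityTheory Real

attribute [local instance] Classical.propDecidable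


lemma measurable_realSign : Measurable Real.sign := by
  have h : Real.sign = fun r : ℝ => if r < 0 then (-1:ℝ) else if 0 < r then 1 else 0 := by
    funext r; rfl
  rw [h]
  exact Measurable.ite (measurableSet_lt measurable_id measurable_const) measurable_const
    (Measurable.ite (measurableSet_lt measurable_const measurable_id) measurable_const
      measurable_const)

lemma abs_realSign_le (x : ℝ) : |Real.sign x| ≤ 1 := by
  rcases Real.sign_apply_eq x with h | h | h <;> rw [h] <;> norm_num

lemma sign_mul_self_of_ne (x : ℝ) (hx : x ≠ 0) : Real.sign x * Real.sign x = 1 := by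
  rcases Real.sign_apply_eq_of_ne_zero x hx with h | h <;> rw [h] <;> norm_num

lemma gaussian_singleton (c : ℝ) : gaussianReal 0 1 {c} = 0 :=
  gaussianReal_absolutelyContinuous 0 one_ne_zero (Real.volume_singleton)

lemma pi_coord_null (m : ℕ) (k : Fin m) (c : ℝ) :
    Measure.pi (fun _ : Fin m => gaussianReal 0 1) {h | h k = c} = 0 := by
  classical
  have hset : {h : Fin m → ℝ | h k = c}
      = Set.pi Set.univ (fun l => if l = k then ({c} : Set ℝ) else Set.univ) := by
    ext h
    simp only [Set.mem_setOf_eq, Set.mem_univ_pi]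
    constructor
    · intro hh l
      split_ifs with h'
      · subst h'; simpa using hh
      · trivial
    · intro hh
      have := hh k
      simpa using this
  rw [hset, Measure.pi_pi]
  refine Finset.prod_eq_zero (Finset.mem_univ k) ?_
  simp [gaussian_singleton]

lemma pi_diag_null (m : ℕ) (i j : Fin (m + 1)) (hij : i ≠ j) :
    Measure.pi (fun _ : Fin (m + 1) => gaussianReal 0 1) {g | g i = g j} = 0 := by
  obtain ⟨j', hj'⟩ := Fin.exists_succAbove_eq (hij.symm)
  set e := MeasurableEquiv.piFinSuccAbove (fun _ : Fin (m + 1) => ℝ) i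
  have mp := measurePreserving_piFinSuccAbove (fun _ : Fin (m + 1) => gaussianReal 0 1) i
  have hB : MeasurableSet {p : ℝ × (Fin m → ℝ) | p.1 = p.2 j'} :=
    measurableSet_eq_fun measurable_fst ((measurable_pi_apply j').comp measurable_snd)
  have hpre : {g : Fin (m + 1) → ℝ | g i = g j}
      = e ⁻¹' {p : ℝ × (Fin m → ℝ) | p.1 = p.2 j'} := by
    ext g
    simp only [Set.mem_setOf_eq, Set.mem_preimage]
    have h1 : (e g).1 = g i := rfl
    have h2 : (e g).2 j' = g (i.succAbove j') := rfl
    rw [h1, h2, hj']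
  rw [hpre, mp.measure_preimage hB.nullMeasurableSet]
  rw [Measure.prod_apply hB]
  have h0 : ∀ x : ℝ, (Measure.pi fun _ : Fin m => gaussianReal 0 1) {a : Fin m → ℝ | x = a j'} = 0 := by
    intro x
    have hs : {a : Fin m → ℝ | x = a j'} = {h : Fin m → ℝ | h j' = x} := by
      ext h; simp [eq_comm]
    rw [hs]
    exact pi_coord_null m j' x
  simp [h0]

lemma integral_comp_perm (n : ℕ) (σ : Equiv.Perm (Fin n)) (F : (Fin n → ℝ) → ℝ) :
    ∫ g, F (fun l => g (σ l)) ∂(Measure.pi fun _ : Fin n => gaussianReal 0 1)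
      = ∫ g, F g ∂(Measure.pi fun _ : Fin n => gaussianReal 0 1) := by
  have mp := measurePreserving_piCongrLeft (fun _ : Fin n => gaussianReal 0 1) σ.symm
  have heq : ∀ g : Fin n → ℝ,
      (MeasurableEquiv.piCongrLeft (fun _ : Fin n => ℝ) σ.symm) g = fun l => g (σ l) := by
    intro g
    funext l
    have := MeasurableEquiv.piCongrLeft_apply_apply σ.symm (β := fun _ : Fin n => ℝ) g (σ l)
    simpa using this
  have := mp.integral_comp (MeasurableEquiv.piCongrLeft (fun _ : Fin n => ℝ) σ.symm).measurableEmbedding F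
  rw [← this]
  refine integral_congr_ae (Filter.Eventually.of_forall fun g => ?_)
  exact congrArg F (heq g).symm

lemma six_sum {x y z : ℝ} (hxy : x ≠ y) (hyz : y ≠ z) (hxz : x ≠ z) :
    Real.sign (x - y) * Real.sign (y - z) + Real.sign (y - x) * Real.sign (x - z)
    + Real.sign (x - z) * Real.sign (z - y) + Real.sign (z - y) * Real.sign (y - x)
    + Real.sign (y - z) * Real.sign (z - x) + Real.sign (z - x) * Real.sign (x - y) = -2 := by
  have e1 : y - x = -(x - y) := by ring
  have e2 : z - y = -(y - z) := by ring
  have e3 : z - x = -(x - z) := by ring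
  rw [e1, e2, e3, Real.sign_neg, Real.sign_neg, Real.sign_neg]
  have hp : ∀ {a b : ℝ}, b < a → Real.sign (a - b) = 1 := fun h =>
    Real.sign_of_pos (by linarith)
  have hm : ∀ {a b : ℝ}, a < b → Real.sign (a - b) = -1 := fun h =>
    Real.sign_of_neg (by linarith)
  rcases hxy.lt_or_gt with h1 | h1 <;> rcases hyz.lt_or_gt with h2 | h2 <;>
    rcases hxz.lt_or_gt with h3 | h3 <;>
    simp only [hp h1, hm h1, hp h2, hm h2, hp h3, hm h3] <;> norm_num <;> linarith

lemma ae_ne (n : ℕ) (i j : Fin n) (hij : i ≠ j) :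
    ∀ᵐ g ∂(Measure.pi fun _ : Fin n => gaussianReal 0 1), g i ≠ g j := by
  obtain ⟨m, rfl⟩ : ∃ m, n = m + 1 := ⟨n - 1, by have := i.pos; omega⟩
  rw [ae_iff]
  have hs : {g : Fin (m + 1) → ℝ | ¬ g i ≠ g j} = {g | g i = g j} := by ext g; simp
  rw [hs]
  exact pi_diag_null m i j hij

lemma integrable_signs (n : ℕ) (a b c d : Fin n) :
    Integrable (fun g : Fin n → ℝ => Real.sign (g a - g b) * Real.sign (g c - g d))
      (Measure.pi fun _ : Fin n => gaussianReal 0 1) := by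
  have hm : Measurable fun g : Fin n → ℝ => Real.sign (g a - g b) * Real.sign (g c - g d) :=
    (measurable_realSign.comp ((measurable_pi_apply a).sub (measurable_pi_apply b))).mul
      (measurable_realSign.comp ((measurable_pi_apply c).sub (measurable_pi_apply d)))
  refine Integrable.mono' (integrable_const (1:ℝ)) hm.aestronglyMeasurable
    (Filter.Eventually.of_forall fun g => ?_)
  rw [Real.norm_eq_abs, abs_mul]
  have h1 := abs_realSign_le (g a - g b)
  have h2 := abs_realSign_le (g c - g d)
  nlinarith [abs_nonneg (Real.sign (g a - g b)), abs_nonneg (Real.sign (g c - g d))]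

lemma int_sign_sq (n : ℕ) (a b : Fin n) (hab : a ≠ b) :
    ∫ g, Real.sign (g a - g b) * Real.sign (g a - g b)
      ∂(Measure.pi fun _ : Fin n => gaussianReal 0 1) = 1 := by
  have hae : ∀ᵐ g ∂(Measure.pi fun _ : Fin n => gaussianReal 0 1),
      Real.sign (g a - g b) * Real.sign (g a - g b) = 1 :=
    (ae_ne n a b hab).mono fun g hg => sign_mul_self_of_ne _ (sub_ne_zero.mpr hg)
  rw [integral_congr_ae hae, integral_const]
  simp

lemma int_adj (n : ℕ) (a b c : Fin n) (hab : a ≠ b) (hbc : b ≠ c) (hac : a ≠ c) :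
    ∫ g, Real.sign (g a - g b) * Real.sign (g b - g c)
      ∂(Measure.pi fun _ : Fin n => gaussianReal 0 1) = -(1/3) := by
  set μ := Measure.pi fun _ : Fin n => gaussianReal 0 1 with hμ
  set I := ∫ g, Real.sign (g a - g b) * Real.sign (g b - g c) ∂μ with hIdef
  have key : ∀ σ : Equiv.Perm (Fin n),
      ∫ g, Real.sign (g (σ a) - g (σ b)) * Real.sign (g (σ b) - g (σ c)) ∂μ = I :=
    fun σ => integral_comp_perm n σ
      (fun g => Real.sign (g a - g b) * Real.sign (g b - g c))
  have I2 : ∫ g, Real.sign (g b - g a) * Real.sign (g a - g c) ∂μ = I := by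
    have := key (Equiv.swap a b)
    simpa only [Equiv.swap_apply_left, Equiv.swap_apply_right,
      Equiv.swap_apply_of_ne_of_ne hac.symm hbc.symm] using this
  have I3 : ∫ g, Real.sign (g a - g c) * Real.sign (g c - g b) ∂μ = I := by
    have := key (Equiv.swap b c)
    simpa only [Equiv.swap_apply_left, Equiv.swap_apply_right,
      Equiv.swap_apply_of_ne_of_ne hab hac] using this
  have I4 : ∫ g, Real.sign (g c - g b) * Real.sign (g b - g a) ∂μ = I := by
    have := key (Equiv.swap a c)
    simpa only [Equiv.swap_apply_left, Equiv.swap_apply_right,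
      Equiv.swap_apply_of_ne_of_ne hab.symm hbc] using this
  have I5 : ∫ g, Real.sign (g b - g c) * Real.sign (g c - g a) ∂μ = I := by
    have := key ((Equiv.swap b c).trans (Equiv.swap a b))
    simpa only [Equiv.trans_apply, Equiv.swap_apply_left, Equiv.swap_apply_right,
      Equiv.swap_apply_of_ne_of_ne hab hac,
      Equiv.swap_apply_of_ne_of_ne hac.symm hbc.symm] using this
  have I6 : ∫ g, Real.sign (g c - g a) * Real.sign (g a - g b) ∂μ = I := by
    have := key ((Equiv.swap a b).trans (Equiv.swap b c))
    simpa only [Equiv.trans_apply, Equiv.swap_apply_left, Equiv.swap_apply_right,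
      Equiv.swap_apply_of_ne_of_ne hab hac,
      Equiv.swap_apply_of_ne_of_ne hac.symm hbc.symm] using this
  have hint : ∀ x y z : Fin n, Integrable
      (fun g : Fin n → ℝ => Real.sign (g x - g y) * Real.sign (g y - g z)) μ :=
    fun x y z => integrable_signs n x y y z
  have e1 := hint a b c
  have e2 := hint b a c
  have e3 := hint a c b
  have e4 := hint c b a
  have e5 := hint b c a
  have e6 := hint c a b
  have A2 : ∫ g, (Real.sign (g a - g b) * Real.sign (g b - g c)
      + Real.sign (g b - g a) * Real.sign (g a - g c)) ∂μ = I + I := by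
    rw [integral_add e1 e2, I2, ← hIdef]
  have e12 : Integrable (fun g : Fin n → ℝ => Real.sign (g a - g b) * Real.sign (g b - g c)
      + Real.sign (g b - g a) * Real.sign (g a - g c)) μ := e1.add e2
  have e13 : Integrable (fun g : Fin n → ℝ => Real.sign (g a - g b) * Real.sign (g b - g c)
      + Real.sign (g b - g a) * Real.sign (g a - g c)
      + Real.sign (g a - g c) * Real.sign (g c - g b)) μ := e12.add e3
  have e14 : Integrable (fun g : Fin n → ℝ => Real.sign (g a - g b) * Real.sign (g b - g c)
      + Real.sign (g b - g a) * Real.sign (g a - g c)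
      + Real.sign (g a - g c) * Real.sign (g c - g b)
      + Real.sign (g c - g b) * Real.sign (g b - g a)) μ := e13.add e4
  have e15 : Integrable (fun g : Fin n → ℝ => Real.sign (g a - g b) * Real.sign (g b - g c)
      + Real.sign (g b - g a) * Real.sign (g a - g c)
      + Real.sign (g a - g c) * Real.sign (g c - g b)
      + Real.sign (g c - g b) * Real.sign (g b - g a)
      + Real.sign (g b - g c) * Real.sign (g c - g a)) μ := e14.add e5
  have A3 : ∫ g, (Real.sign (g a - g b) * Real.sign (g b - g c)
      + Real.sign (g b - g a) * Real.sign (g a - g c)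
      + Real.sign (g a - g c) * Real.sign (g c - g b)) ∂μ = I + I + I := by
    rw [integral_add e12 e3, A2, I3]
  have A4 : ∫ g, (Real.sign (g a - g b) * Real.sign (g b - g c)
      + Real.sign (g b - g a) * Real.sign (g a - g c)
      + Real.sign (g a - g c) * Real.sign (g c - g b)
      + Real.sign (g c - g b) * Real.sign (g b - g a)) ∂μ = I + I + I + I := by
    rw [integral_add e13 e4, A3, I4]
  have A5 : ∫ g, (Real.sign (g a - g b) * Real.sign (g b - g c)
      + Real.sign (g b - g a) * Real.sign (g a - g c)
      + Real.sign (g a - g c) * Real.sign (g c - g b)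
      + Real.sign (g c - g b) * Real.sign (g b - g a)
      + Real.sign (g b - g c) * Real.sign (g c - g a)) ∂μ = I + I + I + I + I := by
    rw [integral_add e14 e5, A4, I5]
  have hsum : ∫ g, (Real.sign (g a - g b) * Real.sign (g b - g c)
      + Real.sign (g b - g a) * Real.sign (g a - g c)
      + Real.sign (g a - g c) * Real.sign (g c - g b)
      + Real.sign (g c - g b) * Real.sign (g b - g a)
      + Real.sign (g b - g c) * Real.sign (g c - g a)
      + Real.sign (g c - g a) * Real.sign (g a - g b)) ∂μ = 6 * I := by
    rw [integral_add e15 e6, A5, I6]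
    ring
  have hae2 : ∀ᵐ g ∂μ, (Real.sign (g a - g b) * Real.sign (g b - g c)
      + Real.sign (g b - g a) * Real.sign (g a - g c)
      + Real.sign (g a - g c) * Real.sign (g c - g b)
      + Real.sign (g c - g b) * Real.sign (g b - g a)
      + Real.sign (g b - g c) * Real.sign (g c - g a)
      + Real.sign (g c - g a) * Real.sign (g a - g b)) = -2 := by
    filter_upwards [ae_ne n a b hab, ae_ne n b c hbc, ae_ne n a c hac] with g hg1 hg2 hg3
    exact six_sum hg1 hg2 hg3
  have hval : ∫ g, (Real.sign (g a - g b) * Real.sign (g b - g c)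
      + Real.sign (g b - g a) * Real.sign (g a - g c)
      + Real.sign (g a - g c) * Real.sign (g c - g b)
      + Real.sign (g c - g b) * Real.sign (g b - g a)
      + Real.sign (g b - g c) * Real.sign (g c - g a)
      + Real.sign (g c - g a) * Real.sign (g a - g b)) ∂μ = -2 := by
    rw [integral_congr_ae hae2, integral_const]
    simp
  have h6 : 6 * I = -2 := hsum.symm.trans hval
  linarith

/-- For a standard Gaussian `g` in `ℝⁿ`, the difference operator with rows
`ω_i = e_i - e_{i+1}` (indexed from `0` to `n-2`) and a subset `S̄` of row indices,
`E[Σ_{j,k ∈ S̄} ⟨ω_j,ω_k⟩ sgn⟨ω_j,g⟩ sgn⟨ω_k,g⟩]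
  = Σ_{j,k ∈ S̄} ⟨ω_j,ω_k⟩ (2/π) arcsin(⟨ω_j,ω_k⟩/2)
  ≤ 2|S̄| + (2/3) #{i : i ∈ S̄ ∧ i-1 ∈ S̄}`. -/
theorem stmt19 (n : ℕ) (hn : 3 ≤ n)
    (ω : ℕ → ℕ → ℝ)
    (hω : ∀ i l, ω i l = if l = i then 1 else if l = i + 1 then -1 else 0)
    (Sb : Finset ℕ) (hSb : Sb ⊆ Finset.range (n - 1)) :
    (∫ g : Fin n → ℝ,
        ∑ j ∈ Sb, ∑ k ∈ Sb,
          (∑ l ∈ Finset.range n, ω j l * ω k l) *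
            (Real.sign (∑ l : Fin n, ω j (l : ℕ) * g l) *
              Real.sign (∑ l : Fin n, ω k (l : ℕ) * g l))
        ∂(Measure.pi fun _ => gaussianReal 0 1))
      = (∑ j ∈ Sb, ∑ k ∈ Sb,
          (∑ l ∈ Finset.range n, ω j l * ω k l) *
            ((2 / π) * Real.arcsin ((∑ l ∈ Finset.range n, ω j l * ω k l) / 2))) ∧
    (∑ j ∈ Sb, ∑ k ∈ Sb,
        (∑ l ∈ Finset.range n, ω j l * ω k l) *
          ((2 / π) * Real.arcsin ((∑ l ∈ Finset.range n, ω j l * ω k l) / 2)))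
      ≤ 2 * (Sb.card : ℝ)
        + (2 / 3) * (((Finset.Icc 1 (n - 2)).filter
            (fun i => i ∈ Sb ∧ i - 1 ∈ Sb)).card : ℝ) := by
  have hmem : ∀ j ∈ Sb, j < n - 1 := fun j hj => Finset.mem_range.mp (hSb hj)
  -- the inner product of rows
  have hC : ∀ j k : ℕ, j < n - 1 → k < n - 1 →
      (∑ l ∈ Finset.range n, ω j l * ω k l)
        = (if j = k then (2:ℝ) else if k = j + 1 ∨ j = k + 1 then -1 else 0) := by
    intro j k hj hk
    by_cases hjk : j = k
    · subst hjk
      have hpt : ∀ l, ω j l * ω j l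
          = (if l = j then (1:ℝ) else 0) + (if l = j + 1 then 1 else 0) := by
        intro l
        rw [hω]
        split_ifs <;> first | (exfalso; omega) | norm_num
      rw [Finset.sum_congr rfl fun l _ => hpt l, Finset.sum_add_distrib,
        Finset.sum_ite_eq' (Finset.range n) j (fun _ => (1:ℝ)),
        Finset.sum_ite_eq' (Finset.range n) (j+1) (fun _ => (1:ℝ))]
      simp only [Finset.mem_range]
      rw [if_pos (by omega), if_pos (by omega)]
      norm_num
    · by_cases h1 : k = j + 1
      · have hpt : ∀ l, ω j l * ω k l = (if l = j + 1 then (-1:ℝ) else 0) := by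
          intro l
          rw [hω, hω]
          split_ifs <;> first | (exfalso; omega) | norm_num
        rw [Finset.sum_congr rfl fun l _ => hpt l,
          Finset.sum_ite_eq' (Finset.range n) (j+1) (fun _ => (-1:ℝ))]
        simp only [Finset.mem_range]
        rw [if_pos (by omega), if_neg hjk, if_pos (Or.inl h1)]
      · by_cases h2 : j = k + 1
        · have hpt : ∀ l, ω j l * ω k l = (if l = k + 1 then (-1:ℝ) else 0) := by
            intro l
            rw [hω, hω]
            split_ifs <;> first | (exfalso; omega) | norm_num
          rw [Finset.sum_congr rfl fun l _ => hpt l,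
            Finset.sum_ite_eq' (Finset.range n) (k+1) (fun _ => (-1:ℝ))]
          simp only [Finset.mem_range]
          rw [if_pos (by omega), if_neg hjk, if_pos (Or.inr h2)]
        · rw [if_neg hjk, if_neg (by tauto)]
          refine Finset.sum_eq_zero fun l _ => ?_
          rw [hω, hω]
          split_ifs <;> first | (exfalso; omega) | norm_num
  -- the row applied to g
  have hX : ∀ (j : ℕ) (a b : Fin n), (a : ℕ) = j → (b : ℕ) = j + 1 → ∀ g : Fin n → ℝ,
      (∑ l : Fin n, ω j (l : ℕ) * g l) = g a - g b := by
    intro j a b ha hb g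
    have hab : a ≠ b := by
      intro h; rw [h] at ha; omega
    have hpt : ∀ l : Fin n, ω j (l : ℕ) * g l
        = (if l = a then g l else 0) + (if l = b then -g l else 0) := by
      intro l
      rw [hω]
      by_cases e1 : (l : ℕ) = j
      · have hla : l = a := Fin.ext (by omega)
        have hlb : l ≠ b := by intro h; rw [h] at e1; omega
        rw [if_pos e1, if_pos hla, if_neg hlb]
        ring
      · by_cases e2 : (l : ℕ) = j + 1
        · have hlb : l = b := Fin.ext (by omega)
          have hla : l ≠ a := by intro h; rw [h] at e2; omega
          rw [if_neg e1, if_pos e2, if_pos hlb, if_neg hla]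
          ring
        · have hla : l ≠ a := by intro h; rw [h] at e1; omega
          have hlb : l ≠ b := by intro h; rw [h] at e2; omega
          rw [if_neg e1, if_neg e2, if_neg hla, if_neg hlb]
          ring
    rw [Finset.sum_congr rfl fun l _ => hpt l, Finset.sum_add_distrib,
      Finset.sum_ite_eq' Finset.univ a (fun l => g l),
      Finset.sum_ite_eq' Finset.univ b (fun l => -g l)]
    simp [sub_eq_add_neg]
  set μ := (Measure.pi fun _ : Fin n => gaussianReal 0 1) with hμdef
  have hπ : (π : ℝ) ≠ 0 := Real.pi_ne_zero
  have harcsin_half : Real.arcsin (1/2) = π / 6 := by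
    rw [← Real.sin_pi_div_six,
      Real.arcsin_sin (by linarith [Real.pi_pos]) (by linarith [Real.pi_pos])]
  -- per-pair integral value
  have key : ∀ j ∈ Sb, ∀ k ∈ Sb,
      (∫ g : Fin n → ℝ, (∑ l ∈ Finset.range n, ω j l * ω k l) *
          (Real.sign (∑ l : Fin n, ω j (l : ℕ) * g l) *
            Real.sign (∑ l : Fin n, ω k (l : ℕ) * g l)) ∂μ)
        = (if j = k then (2:ℝ) else if k = j + 1 ∨ j = k + 1 then 1/3 else 0) := by
    intro j hj k hk
    have hjn := hmem j hj
    have hkn := hmem k hk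
    by_cases hjk : j = k
    · subst hjk
      have hfe : (fun g : Fin n → ℝ => (∑ l ∈ Finset.range n, ω j l * ω j l) *
          (Real.sign (∑ l : Fin n, ω j (l : ℕ) * g l) *
            Real.sign (∑ l : Fin n, ω j (l : ℕ) * g l)))
          = fun g : Fin n → ℝ => (∑ l ∈ Finset.range n, ω j l * ω j l) *
            (Real.sign (g ⟨j, by omega⟩ - g ⟨j + 1, by omega⟩) *
              Real.sign (g ⟨j, by omega⟩ - g ⟨j + 1, by omega⟩)) :=
        funext fun g => by rw [hX j ⟨j, by omega⟩ ⟨j + 1, by omega⟩ rfl rfl g]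
      rw [hfe, integral_const_mul,
        int_sign_sq n ⟨j, by omega⟩ ⟨j + 1, by omega⟩
          (Fin.ne_of_val_ne (show j ≠ j + 1 by omega)),
        hC j j hjn hjn, if_pos rfl, if_pos rfl]
      norm_num
    · by_cases h1 : k = j + 1
      · subst h1
        have hfe : (fun g : Fin n → ℝ => (∑ l ∈ Finset.range n, ω j l * ω (j+1) l) *
            (Real.sign (∑ l : Fin n, ω j (l : ℕ) * g l) *
              Real.sign (∑ l : Fin n, ω (j+1) (l : ℕ) * g l)))
            = fun g : Fin n → ℝ => (∑ l ∈ Finset.range n, ω j l * ω (j+1) l) *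
              (Real.sign (g ⟨j, by omega⟩ - g ⟨j + 1, by omega⟩) *
                Real.sign (g ⟨j + 1, by omega⟩ - g ⟨j + 1 + 1, by omega⟩)) :=
          funext fun g => by
            rw [hX j ⟨j, by omega⟩ ⟨j + 1, by omega⟩ rfl rfl g,
              hX (j+1) ⟨j + 1, by omega⟩ ⟨j + 1 + 1, by omega⟩ rfl rfl g]
        rw [hfe, integral_const_mul,
          int_adj n ⟨j, by omega⟩ ⟨j + 1, by omega⟩ ⟨j + 1 + 1, by omega⟩
            (Fin.ne_of_val_ne (show j ≠ j + 1 by omega))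
            (Fin.ne_of_val_ne (show j + 1 ≠ j + 1 + 1 by omega))
            (Fin.ne_of_val_ne (show j ≠ j + 1 + 1 by omega)),
          hC j (j+1) hjn hkn, if_neg hjk, if_pos (Or.inl rfl),
          if_neg hjk, if_pos (Or.inl rfl)]
        norm_num
      · by_cases h2 : j = k + 1
        · subst h2
          have hfe : (fun g : Fin n → ℝ => (∑ l ∈ Finset.range n, ω (k+1) l * ω k l) *
              (Real.sign (∑ l : Fin n, ω (k+1) (l : ℕ) * g l) *
                Real.sign (∑ l : Fin n, ω k (l : ℕ) * g l)))
              = fun g : Fin n → ℝ => (∑ l ∈ Finset.range n, ω (k+1) l * ω k l) *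
                (Real.sign (g ⟨k, by omega⟩ - g ⟨k + 1, by omega⟩) *
                  Real.sign (g ⟨k + 1, by omega⟩ - g ⟨k + 1 + 1, by omega⟩)) :=
            funext fun g => by
              rw [hX (k+1) ⟨k + 1, by omega⟩ ⟨k + 1 + 1, by omega⟩ rfl rfl g,
                hX k ⟨k, by omega⟩ ⟨k + 1, by omega⟩ rfl rfl g]
              ring
          rw [hfe, integral_const_mul,
            int_adj n ⟨k, by omega⟩ ⟨k + 1, by omega⟩ ⟨k + 1 + 1, by omega⟩
              (Fin.ne_of_val_ne (show k ≠ k + 1 by omega))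
              (Fin.ne_of_val_ne (show k + 1 ≠ k + 1 + 1 by omega))
              (Fin.ne_of_val_ne (show k ≠ k + 1 + 1 by omega)),
            hC (k+1) k hjn hkn, if_neg hjk, if_pos (Or.inr rfl),
            if_neg hjk, if_pos (Or.inr rfl)]
          norm_num
        · have hC0 := hC j k hjn hkn
          rw [if_neg hjk, if_neg (by tauto)] at hC0
          have hfe : (fun g : Fin n → ℝ => (∑ l ∈ Finset.range n, ω j l * ω k l) *
              (Real.sign (∑ l : Fin n, ω j (l : ℕ) * g l) *
                Real.sign (∑ l : Fin n, ω k (l : ℕ) * g l)))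
              = fun _ : Fin n → ℝ => (0:ℝ) :=
            funext fun g => by rw [hC0]; ring
          rw [hfe, integral_zero, if_neg hjk, if_neg (by tauto)]
  -- per-pair arcsin value
  have key2 : ∀ j k : ℕ, j < n - 1 → k < n - 1 →
      (∑ l ∈ Finset.range n, ω j l * ω k l) *
          ((2 / π) * Real.arcsin ((∑ l ∈ Finset.range n, ω j l * ω k l) / 2))
        = (if j = k then (2:ℝ) else if k = j + 1 ∨ j = k + 1 then 1/3 else 0) := by
    intro j k hjn hkn
    rw [hC j k hjn hkn]
    by_cases hjk : j = k
    · rw [if_pos hjk, if_pos hjk, show (2:ℝ)/2 = 1 by norm_num, Real.arcsin_one]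
      field_simp
    · by_cases h12 : k = j + 1 ∨ j = k + 1
      · rw [if_neg hjk, if_pos h12, if_neg hjk, if_pos h12,
          show (-1:ℝ)/2 = -(1/2) by norm_num, Real.arcsin_neg, harcsin_half]
        field_simp
        ring
      · rw [if_neg hjk, if_neg h12, if_neg hjk, if_neg h12]
        simp
  -- integrability of each summand
  have hInt : ∀ j ∈ Sb, ∀ k ∈ Sb, Integrable
      (fun g : Fin n → ℝ => (∑ l ∈ Finset.range n, ω j l * ω k l) *
        (Real.sign (∑ l : Fin n, ω j (l : ℕ) * g l) *
          Real.sign (∑ l : Fin n, ω k (l : ℕ) * g l))) μ := by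
    intro j hj k hk
    have hjn := hmem j hj
    have hkn := hmem k hk
    have hfe : (fun g : Fin n → ℝ => (∑ l ∈ Finset.range n, ω j l * ω k l) *
        (Real.sign (∑ l : Fin n, ω j (l : ℕ) * g l) *
          Real.sign (∑ l : Fin n, ω k (l : ℕ) * g l)))
        = fun g : Fin n → ℝ => (∑ l ∈ Finset.range n, ω j l * ω k l) *
          (Real.sign (g ⟨j, by omega⟩ - g ⟨j + 1, by omega⟩) *
            Real.sign (g ⟨k, by omega⟩ - g ⟨k + 1, by omega⟩)) :=
      funext fun g => by
        rw [hX j ⟨j, by omega⟩ ⟨j + 1, by omega⟩ rfl rfl g,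
          hX k ⟨k, by omega⟩ ⟨k + 1, by omega⟩ rfl rfl g]
    rw [hfe]
    exact (integrable_signs n _ _ _ _).const_mul _
  -- swap integral and sum
  have hswap : (∫ g : Fin n → ℝ,
      ∑ j ∈ Sb, ∑ k ∈ Sb,
        (∑ l ∈ Finset.range n, ω j l * ω k l) *
          (Real.sign (∑ l : Fin n, ω j (l : ℕ) * g l) *
            Real.sign (∑ l : Fin n, ω k (l : ℕ) * g l)) ∂μ)
      = ∑ j ∈ Sb, ∑ k ∈ Sb, ∫ g : Fin n → ℝ,
          (∑ l ∈ Finset.range n, ω j l * ω k l) *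
            (Real.sign (∑ l : Fin n, ω j (l : ℕ) * g l) *
              Real.sign (∑ l : Fin n, ω k (l : ℕ) * g l)) ∂μ := by
    rw [integral_finset_sum Sb
      (fun j hj => integrable_finset_sum Sb (fun k hk => hInt j hj k hk))]
    exact Finset.sum_congr rfl fun j hj =>
      integral_finset_sum Sb (fun k hk => hInt j hj k hk)
  -- value of the sum of t
  have hsplitT : ∀ j k : ℕ,
      (if j = k then (2:ℝ) else if k = j + 1 ∨ j = k + 1 then 1/3 else 0)
        = (if j = k then (2:ℝ) else 0) + (if k = j + 1 then 1/3 else 0)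
          + (if j = k + 1 then 1/3 else 0) := by
    intro j k
    split_ifs <;> first | (exfalso; omega) | norm_num
  have hA : (∑ j ∈ Sb, ∑ k ∈ Sb, (if j = k then (2:ℝ) else 0)) = 2 * Sb.card := by
    have h1 : ∀ j ∈ Sb, (∑ k ∈ Sb, if j = k then (2:ℝ) else 0) = 2 := by
      intro j hj
      rw [Finset.sum_ite_eq Sb j (fun _ => (2:ℝ)), if_pos hj]
    rw [Finset.sum_congr rfl h1, Finset.sum_const, nsmul_eq_mul]
    ring
  have hB : (∑ j ∈ Sb, ∑ k ∈ Sb, (if k = j + 1 then (1/3:ℝ) else 0))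
      = (1/3) * ((Sb.filter fun j => j + 1 ∈ Sb).card : ℝ) := by
    have h1 : ∀ j ∈ Sb, (∑ k ∈ Sb, if k = j + 1 then (1/3:ℝ) else 0)
        = (if j + 1 ∈ Sb then (1/3:ℝ) else 0) := by
      intro j hj
      rw [Finset.sum_ite_eq' Sb (j+1) (fun _ => (1/3:ℝ))]
    rw [Finset.sum_congr rfl h1, ← Finset.sum_filter, Finset.sum_const, nsmul_eq_mul]
    ring
  have hB' : (∑ j ∈ Sb, ∑ k ∈ Sb, (if j = k + 1 then (1/3:ℝ) else 0))
      = (1/3) * ((Sb.filter fun j => j + 1 ∈ Sb).card : ℝ) := by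
    rw [Finset.sum_comm]
    have h1 : ∀ k ∈ Sb, (∑ j ∈ Sb, if j = k + 1 then (1/3:ℝ) else 0)
        = (if k + 1 ∈ Sb then (1/3:ℝ) else 0) := by
      intro k hk
      rw [Finset.sum_ite_eq' Sb (k+1) (fun _ => (1/3:ℝ))]
    rw [Finset.sum_congr rfl h1, ← Finset.sum_filter, Finset.sum_const, nsmul_eq_mul]
    ring
  have hT : (∑ j ∈ Sb, ∑ k ∈ Sb,
      (if j = k then (2:ℝ) else if k = j + 1 ∨ j = k + 1 then 1/3 else 0))
      = 2 * (Sb.card : ℝ) + (2/3) * ((Sb.filter fun j => j + 1 ∈ Sb).card : ℝ) := by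
    rw [Finset.sum_congr rfl fun j _ => Finset.sum_congr rfl fun k _ => hsplitT j k]
    simp only [Finset.sum_add_distrib]
    rw [hA, hB, hB']
    ring
  have hcard : (Sb.filter fun j => j + 1 ∈ Sb).card
      = ((Finset.Icc 1 (n - 2)).filter (fun i => i ∈ Sb ∧ i - 1 ∈ Sb)).card := by
    refine Finset.card_bij' (fun j _ => j + 1) (fun i _ => i - 1) ?hi ?hj ?li ?ri
    case hi =>
      intro a ha
      simp only [Finset.mem_filter] at ha ⊢
      obtain ⟨haS, haS1⟩ := ha
      have := hmem a haS
      have h2 := hmem (a+1) haS1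
      refine ⟨Finset.mem_Icc.mpr ⟨by omega, by omega⟩, haS1, by simpa using haS⟩
    case hj =>
      intro a ha
      simp only [Finset.mem_filter] at ha ⊢
      obtain ⟨haI, haS, haS1⟩ := ha
      have h1 := Finset.mem_Icc.mp haI
      refine ⟨haS1, ?_⟩
      have h2 : a - 1 + 1 = a := by omega
      rw [h2]
      exact haS
    case li =>
      intro a ha
      show a + 1 - 1 = a
      omega
    case ri =>
      intro a ha
      simp only [Finset.mem_filter] at ha
      have h1 := Finset.mem_Icc.mp ha.1
      show a - 1 + 1 = a
      omega
  constructor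
  · rw [hswap]
    refine Finset.sum_congr rfl fun j hj => Finset.sum_congr rfl fun k hk => ?_
    rw [key j hj k hk]
    exact (key2 j k (hmem j hj) (hmem k hk)).symm
  · have heq : (∑ j ∈ Sb, ∑ k ∈ Sb,
        (∑ l ∈ Finset.range n, ω j l * ω k l) *
          ((2 / π) * Real.arcsin ((∑ l ∈ Finset.range n, ω j l * ω k l) / 2)))
        = ∑ j ∈ Sb, ∑ k ∈ Sb,
          (if j = k then (2:ℝ) else if k = j + 1 ∨ j = k + 1 then 1/3 else 0) :=
      Finset.sum_congr rfl fun j hj => Finset.sum_congr rfl fun k hk =>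
        key2 j k (hmem j hj) (hmem k hk)
    rw [heq, hT, hcard]
end
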